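/- Let (X,d,A) be a metric pair and p ∈ [1,∞]. The Wasserstein distance W_p is translation subinvariant on D(X,A): for all α, β, γ ∈ D(X,A), W_p(α+γ, β+γ) ≤ W_p(α, β). -/

import Mathlib

open scoped ENNReal
open Finsupp

/-- The `ℓᵖ` norm of a finite multiset of values in `[0,∞]`, for `p ∈ [1,∞]`. -/
noncomputable def lpNorm (p : ℝ≥0∞) (s : Multiset ℝ≥0∞) : ℝ≥0∞ :=
  if p = ∞ then s.sup else (s.map (fun x => x ^ p.toReal)).sum ^ (1 / p.toReal)

/-- The `ℓᵖ` norm of a pair of values in `[0,∞]`. -/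
noncomputable def lpPair (p : ℝ≥0∞) (a b : ℝ≥0∞) : ℝ≥0∞ := lpNorm p {a, b}

/-- A formal sum is supported in `A`. -/
def SuppIn {X : Type*} (A : Set X) (α : X →₀ ℕ) : Prop := ↑α.support ⊆ A

/-- Equality modulo `D(A)`: `α = β (mod D(A))`. -/
def DRel {X : Type*} (A : Set X) (α β : X →₀ ℕ) : Prop :=
  ∃ a b : X →₀ ℕ, SuppIn A a ∧ SuppIn A b ∧ α + a = β + b

/-- `σ ∈ D(X × X)` is a matching between `α` and `β` (mod `D(A)`). -/
noncomputable def IsMatching {X : Type*} (A : Set X) (σ : X × X →₀ ℕ) (α β : X →₀ ℕ) : Prop :=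
  DRel A (Finsupp.mapDomain Prod.fst σ) α ∧ DRel A (Finsupp.mapDomain Prod.snd σ) β

/-- The `p`-cost of a matching `σ` with respect to `d`. -/
noncomputable def matchCost {X : Type*} (d : X → X → ℝ≥0∞) (p : ℝ≥0∞) (σ : X × X →₀ ℕ) : ℝ≥0∞ :=
  lpNorm p (σ.toMultiset.map (fun z => d z.1 z.2))

/-- The `p`-Wasserstein distance between persistence diagrams on `(X, d, A)`,
computed on representatives in the free commutative monoid `D(X) = (X →₀ ℕ)`. -/
noncomputable def Wp {X : Type*} (d : X → X → ℝ≥0∞) (A : Set X) (p : ℝ≥0∞)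
    (α β : X →₀ ℕ) : ℝ≥0∞ :=
  ⨅ σ : {σ : X × X →₀ ℕ // IsMatching A σ α β}, matchCost d p σ.1


lemma lpNorm_add_replicate_zero (p : ℝ≥0∞) (hp : 1 ≤ p) (s : Multiset ℝ≥0∞) (n : ℕ) :
    lpNorm p (s + Multiset.replicate n 0) = lpNorm p s := by
  unfold lpNorm
  split_ifs with h
  · rw [Multiset.sup_add]
    have : (Multiset.replicate n (0:ℝ≥0∞)).sup ≤ 0 := by
      rw [Multiset.sup_le]
      intro b hb
      simp [Multiset.eq_of_mem_replicate hb]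
    simp [le_antisymm this zero_le]
  · have hpos : 0 < p.toReal := ENNReal.toReal_pos (by positivity) h
    rw [Multiset.map_add, Multiset.sum_add, Multiset.map_replicate,
      ENNReal.zero_rpow_of_pos hpos, Multiset.sum_replicate, smul_zero, add_zero]

lemma DRel_add' {X : Type*} (A : Set X) (x y γ : X →₀ ℕ) (h : DRel A x y) :
    DRel A (x + γ) (y + γ) := by
  obtain ⟨a, b, ha, hb, hab⟩ := h
  exact ⟨a, b, ha, hb, by rw [add_right_comm, hab, add_right_comm]⟩

/-- The `p`-Wasserstein distance on persistence diagrams of a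
metric pair `(X,d,A)` is translation subinvariant:
`W_p(α+γ, β+γ) ≤ W_p(α, β)`. -/
theorem wasserstein_translation_subinvariant {X : Type*}
    (d : X → X → ℝ≥0∞)
    (hrefl : ∀ x, d x x = 0)
    (hsymm : ∀ x y, d x y = d y x)
    (htri : ∀ x y z, d x y ≤ d x z + d z y)
    (A : Set X) (p : ℝ≥0∞) (hp : 1 ≤ p) :
    ∀ α β γ : X →₀ ℕ, Wp d A p (α + γ) (β + γ) ≤ Wp d A p α β := by

  intro α β γ
  apply le_iInf
  rintro ⟨σ, h1, h2⟩
  set γ' : X × X →₀ ℕ := Finsupp.mapDomain (fun x => (x, x)) γ with hγ'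
  have hfst : Finsupp.mapDomain Prod.fst (σ + γ') = Finsupp.mapDomain Prod.fst σ + γ := by
    rw [Finsupp.mapDomain_add, hγ', ← Finsupp.mapDomain_comp]
    congr 1
    exact Finsupp.mapDomain_id
  have hsnd : Finsupp.mapDomain Prod.snd (σ + γ') = Finsupp.mapDomain Prod.snd σ + γ := by
    rw [Finsupp.mapDomain_add, hγ', ← Finsupp.mapDomain_comp]
    congr 1
    exact Finsupp.mapDomain_id
  have hm : IsMatching A (σ + γ') (α + γ) (β + γ) := by
    constructor
    · rw [hfst]; exact DRel_add' A _ _ _ h1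
    · rw [hsnd]; exact DRel_add' A _ _ _ h2
  have hcost : matchCost d p (σ + γ') = matchCost d p σ := by
    unfold matchCost
    rw [Finsupp.toMultiset_add, Multiset.map_add, hγ', ← Finsupp.toMultiset_map,
      Multiset.map_map]
    have : ((Finsupp.toMultiset γ).map ((fun z : X × X => d z.1 z.2) ∘ fun x => (x, x)))
        = Multiset.replicate (Multiset.card γ.toMultiset) 0 := by
      rw [Multiset.eq_replicate]
      constructor
      · simp
      · intro b hb
        obtain ⟨x, _, hx⟩ := Multiset.mem_map.1 hb
        simp [← hx, hrefl]
    rw [this]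
    exact lpNorm_add_replicate_zero p hp _ _
  exact iInf_le_of_le ⟨σ + γ', hm⟩ (le_of_eq hcost)
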